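/- Let $\xi = e^{2\pi i/n}$ be a primitive $n$-th root of unity and let $k$ be an integer with $1 \le k \le n-1$. Then for any two complex numbers $x, y$ with $|x| = |y| = R$ for some fixed $R > 0$, we have $\sum_{i=1}^n |x - \xi^i|^{2k} = \sum_{i=1}^n |y - \xi^i|^{2k}$. -/

import Mathlib

open Finset

private lemma geom_vanish (n : ℕ) (w : ℂ) (hw1 : w ≠ 1) (hwn : w ^ n = 1) :
    ∑ j ∈ range n, w ^ (j + 1) = 0 := by
  have h : ∑ j ∈ range n, w ^ (j + 1) = (∑ j ∈ range n, w ^ j) * w := by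
    rw [Finset.sum_mul]
    exact Finset.sum_congr rfl fun j _ => (pow_succ w j)
  rw [h, geom_sum_eq hw1, hwn]
  simp

private lemma root_sum (n : ℕ) (hn : 0 < n) (ξ : ℂ) (hξ0 : ξ ≠ 0)
    (hprim : IsPrimitiveRoot ξ n) (b c : ℕ) (hb : b < n) (hc : c < n) :
    ∑ j ∈ range n, (ξ ^ (j + 1)) ^ c * ((ξ ^ (j + 1))⁻¹) ^ b
      = if b = c then (n : ℂ) else 0 := by
  have hξn : ξ ^ n = 1 := hprim.pow_eq_one
  by_cases hbc : b = c
  · subst hbc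
    rw [if_pos rfl]
    have : ∀ j ∈ range n, (ξ ^ (j + 1)) ^ b * ((ξ ^ (j + 1))⁻¹) ^ b = 1 := by
      intro j _
      rw [← mul_pow, mul_inv_cancel₀ (pow_ne_zero _ hξ0), one_pow]
    rw [Finset.sum_congr rfl this]
    simp
  · rw [if_neg hbc]
    rcases lt_or_gt_of_ne hbc with hlt | hlt
    · -- b < c : term = (ξ^(c-b))^(j+1)
      have key : ∀ j ∈ range n, (ξ ^ (j + 1)) ^ c * ((ξ ^ (j + 1))⁻¹) ^ b
          = (ξ ^ (c - b)) ^ (j + 1) := by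
        intro j _
        rw [inv_pow (ξ ^ (j + 1)) b, ← pow_sub₀ _ (pow_ne_zero _ hξ0) hlt.le,
          pow_right_comm]
      rw [Finset.sum_congr rfl key]
      refine geom_vanish n _ (hprim.pow_ne_one_of_pos_of_lt (by omega) (by omega)) ?_
      rw [← pow_mul, Nat.mul_comm, pow_mul, hξn, one_pow]
    · -- c < b : term = ((ξ^(b-c))⁻¹)^(j+1)
      have key : ∀ j ∈ range n, (ξ ^ (j + 1)) ^ c * ((ξ ^ (j + 1))⁻¹) ^ b
          = ((ξ ^ (b - c))⁻¹) ^ (j + 1) := by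
        intro j _
        have h2 : ((ξ ^ (j + 1))⁻¹) ^ (b - c)
            = ((ξ ^ (j + 1))⁻¹) ^ b / ((ξ ^ (j + 1))⁻¹) ^ c :=
          pow_sub₀ _ (inv_ne_zero (pow_ne_zero _ hξ0)) hlt.le
        conv_rhs => rw [inv_pow (ξ ^ (b - c)) (j + 1), pow_right_comm ξ (b - c) (j + 1),
          ← inv_pow (ξ ^ (j + 1)) (b - c), h2]
        field_simp
        rw [one_div, ← mul_pow, mul_inv_cancel₀ (pow_ne_zero _ hξ0), one_pow]
      rw [Finset.sum_congr rfl key]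
      refine geom_vanish n _ ?_ ?_
      · simp only [ne_eq, inv_eq_one]
        exact hprim.pow_ne_one_of_pos_of_lt (by omega) (by omega)
      · have h3 : (ξ ^ (b - c)) ^ n = 1 := by
          rw [← pow_mul, Nat.mul_comm, pow_mul, hξn, one_pow]
        rw [inv_pow, h3, inv_one]

private lemma aux_const (n k : ℕ) (hn : 0 < n) (hk : k < n) (R : ℝ) (x : ℂ)
    (hx : ‖x‖ = R) :
    (((∑ i ∈ Finset.range n,
        ‖x - Complex.exp (2 * Real.pi * Complex.I / n) ^ (i + 1)‖ ^ (2 * k)) : ℝ) : ℂ)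
      = ∑ c ∈ Finset.range (k + 1), ∑ b ∈ Finset.range (k - c + 1),
          (if b = c then (n : ℂ) * (k.choose c) * ((k - c).choose b)
              * ((R : ℂ) ^ 2) ^ b * ((R : ℂ) ^ 2 + 1) ^ (k - c - b) else 0) := by
  set ξ : ℂ := Complex.exp (2 * Real.pi * Complex.I / n) with hξdef
  have hprim : IsPrimitiveRoot ξ n := Complex.isPrimitiveRoot_exp n hn.ne'
  have hξ0 : ξ ≠ 0 := Complex.exp_ne_zero _
  have habs : ‖ξ‖ = 1 := by
    have h1 : ‖ξ‖ ^ n = 1 := by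
      rw [← norm_pow, hprim.pow_eq_one, norm_one]
    have h0 : 0 ≤ ‖ξ‖ := norm_nonneg _
    rcases (pow_eq_one_iff_cases).mp h1 with h | h | h
    · omega
    · exact h
    · linarith [h.1]
  have hxconj : x * (starRingEnd ℂ) x = (R : ℂ) ^ 2 := by
    rw [Complex.mul_conj, ← Complex.sq_norm, hx]
    push_cast
    ring
  have hconjξ : ∀ m : ℕ, (starRingEnd ℂ) (ξ ^ m) = (ξ ^ m)⁻¹ := by
    intro m
    rw [← Complex.inv_eq_conj (by rw [norm_pow, habs, one_pow])]
  set A : ℂ := (R : ℂ) ^ 2 + 1 with hA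
  -- term-wise expansion
  have hterm : ∀ j : ℕ,
      ((‖x - ξ ^ (j + 1)‖ ^ (2 * k) : ℝ) : ℂ)
        = ∑ c ∈ range (k + 1), ∑ b ∈ range (k - c + 1),
            ((-1 : ℂ) ^ c * (-1) ^ b * ((starRingEnd ℂ) x) ^ c * x ^ b * A ^ (k - c - b)
              * (k.choose c) * ((k - c).choose b))
              * ((ξ ^ (j + 1)) ^ c * ((ξ ^ (j + 1))⁻¹) ^ b) := by
    intro j
    have step1 : ((‖x - ξ ^ (j + 1)‖ ^ (2 * k) : ℝ) : ℂ)
        = ((x - ξ ^ (j + 1)) * (starRingEnd ℂ) (x - ξ ^ (j + 1))) ^ k := by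
      rw [pow_mul, Complex.sq_norm]
      push_cast
      rw [Complex.mul_conj]
    have step2 : (x - ξ ^ (j + 1)) * (starRingEnd ℂ) (x - ξ ^ (j + 1))
        = (-((starRingEnd ℂ) x * ξ ^ (j + 1))) + ((-(x * (ξ ^ (j + 1))⁻¹)) + A) := by
      rw [map_sub, hconjξ, hA]
      have h1 : (ξ ^ (j + 1)) * (ξ ^ (j + 1))⁻¹ = 1 :=
        mul_inv_cancel₀ (pow_ne_zero _ hξ0)
      linear_combination hxconj + h1
    rw [step1, step2, add_pow]
    refine Finset.sum_congr rfl fun c hc => ?_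
    rw [add_pow, Finset.mul_sum, Finset.sum_mul]
    refine Finset.sum_congr rfl fun b hb => ?_
    rw [neg_pow (x * (ξ ^ (j+1))⁻¹), neg_pow ((starRingEnd ℂ) x * ξ ^ (j+1)),
      mul_pow, mul_pow]
    ring
  calc (((∑ i ∈ Finset.range n,
        ‖x - ξ ^ (i + 1)‖ ^ (2 * k)) : ℝ) : ℂ)
      = ∑ j ∈ range n, ((‖x - ξ ^ (j + 1)‖ ^ (2 * k) : ℝ) : ℂ) := by
        push_cast; rfl
    _ = ∑ j ∈ range n, ∑ c ∈ range (k + 1), ∑ b ∈ range (k - c + 1),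
            ((-1 : ℂ) ^ c * (-1) ^ b * ((starRingEnd ℂ) x) ^ c * x ^ b * A ^ (k - c - b)
              * (k.choose c) * ((k - c).choose b))
              * ((ξ ^ (j + 1)) ^ c * ((ξ ^ (j + 1))⁻¹) ^ b) :=
        Finset.sum_congr rfl fun j _ => hterm j
    _ = ∑ c ∈ range (k + 1), ∑ b ∈ range (k - c + 1),
            ((-1 : ℂ) ^ c * (-1) ^ b * ((starRingEnd ℂ) x) ^ c * x ^ b * A ^ (k - c - b)
              * (k.choose c) * ((k - c).choose b))
              * (∑ j ∈ range n, (ξ ^ (j + 1)) ^ c * ((ξ ^ (j + 1))⁻¹) ^ b) := by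
        rw [Finset.sum_comm]
        refine Finset.sum_congr rfl fun c _ => ?_
        rw [Finset.sum_comm]
        refine Finset.sum_congr rfl fun b _ => ?_
        rw [Finset.mul_sum]
    _ = ∑ c ∈ Finset.range (k + 1), ∑ b ∈ Finset.range (k - c + 1),
          (if b = c then (n : ℂ) * (k.choose c) * ((k - c).choose b)
              * ((R : ℂ) ^ 2) ^ b * A ^ (k - c - b) else 0) := by
        refine Finset.sum_congr rfl fun c hc => Finset.sum_congr rfl fun b hb => ?_
        simp only [Finset.mem_range] at hc hb
        rw [root_sum n hn ξ hξ0 hprim b c (by omega) (by omega)]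
        by_cases hbc : b = c
        · subst hbc
          rw [if_pos rfl, if_pos rfl]
          have h1 : ((starRingEnd ℂ) x) ^ b * x ^ b = ((R : ℂ) ^ 2) ^ b := by
            rw [← mul_pow, mul_comm, hxconj]
          have h2 : ((-1 : ℂ)) ^ b * (-1) ^ b = 1 := by
            rw [← mul_pow]; norm_num
          calc (-1 : ℂ) ^ b * (-1) ^ b * ((starRingEnd ℂ) x) ^ b * x ^ b * A ^ (k - b - b)
              * (k.choose b) * ((k - b).choose b) * (n : ℂ)
              = ((-1 : ℂ) ^ b * (-1) ^ b) * (((starRingEnd ℂ) x) ^ b * x ^ b) * A ^ (k - b - b)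
                * (k.choose b) * ((k - b).choose b) * (n : ℂ) := by ring
            _ = (n : ℂ) * (k.choose b) * ((k - b).choose b)
                * ((R : ℂ) ^ 2) ^ b * A ^ (k - b - b) := by rw [h1, h2]; ring
        · rw [if_neg hbc, if_neg hbc, mul_zero]

theorem stmt_1 (n : ℕ) (hn : 0 < n) (k : ℕ) (hk1 : 1 ≤ k) (hk2 : k ≤ n - 1)
    (R : ℝ) (hR : 0 < R) (x y : ℂ)
    (hx : ‖x‖ = R) (hy : ‖y‖ = R) :
    ∑ i ∈ Finset.range n,
        ‖x - Complex.exp (2 * Real.pi * Complex.I / n) ^ (i + 1)‖ ^ (2 * k) =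
    ∑ i ∈ Finset.range n,
        ‖y - Complex.exp (2 * Real.pi * Complex.I / n) ^ (i + 1)‖ ^ (2 * k) := by
  have hk : k < n := by omega
  have h1 := aux_const n k hn hk R x hx
  have h2 := aux_const n k hn hk R y hy
  have := h1.trans h2.symm
  exact_mod_cast this
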